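/- Set E := ℰ + (n/2)·id and 𝗌 := Σ − (n/2)·id. As operators on W the following relations hold (brackets denote commutators AB − BA, braces denote anticommutators AB + BA): [E,R] = 2R, [E,T] = −2T, [T,R] = 4E, and 𝗌 commutes with R, E, T; [R,δ] = −2Q, [R,Q*] = −2δ*, [R,Q] = 0, [R,δ*] = 0; [T,δ*] = 2Q*, [T,Q] = 2δ, [T,δ] = 0, [T,Q*] = 0; [E,δ] = −δ, [E,δ*] = δ*, [E,Q] = Q, [E,Q*] = −Q*; [𝗌,δ] = δ, [𝗌,δ*] = −δ*, [𝗌,Q] = Q, [𝗌,Q*] = −Q*; δ² = (δ*)² = Q² = (Q*)² = 0, {δ,δ*} = E + 𝗌, {Q,Q*} = E − 𝗌, {δ,Q*} = T, {δ*,Q} = R, {δ,Q} = 0, {δ*,Q*} = 0. (These are the defining relations of the orthosymplectic Lie superalgebra spo(2|1,1) realized by the eight fiberwise operators R, E, T, 𝗌, Q, δ, δ*, Q*.) -/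

import Mathlib

open MvPolynomial Finset

namespace SpinQuant

noncomputable section

/-- Diagonal entries of the signature-`(p,q)` bilinear form `η` on `ℝⁿ`, `n = p + q`:
`+1` for the first `p` indices and `-1` for the last `q` ones.  Since `η` is diagonal
and equal to its inverse, these are simultaneously the `η_{ii}` and the `η^{ii}`. -/
def eta (p q : ℕ) (i : Fin (p + q)) : ℝ := if (i : ℕ) < p then 1 else -1

/-- The supercommutative algebra `W = ℝ[p₁,…,pₙ] ⊗ Λ(ξ¹,…,ξⁿ)`, modeled as families of
polynomials in the even variables `p_i`, indexed by the subsets of `Fin n` recording the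
monomials in the odd variables `ξ^i` (a subset `S` stands for the exterior monomial
`ξ^{i₁} ∧ ⋯ ∧ ξ^{iκ}` with `i₁ < ⋯ < iκ` the elements of `S`). -/
abbrev W (p q : ℕ) := Finset (Fin (p + q)) → MvPolynomial (Fin (p + q)) ℝ

/-- Koszul sign of moving `ξ^i` through the monomial `ξ^S`. -/
def sgn (p q : ℕ) (i : Fin (p + q)) (S : Finset (Fin (p + q))) : ℝ :=
  (-1) ^ (S.filter (fun j => j < i)).card

/-- Multiplication by the even variable `p_i`. -/
def pMul (p q : ℕ) (i : Fin (p + q)) : Module.End ℝ (W p q) where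
  toFun f S := X i * f S
  map_add' f g := by funext S; simp [mul_add]
  map_smul' c f := by funext S; simp [mul_smul_comm]

/-- The partial derivative `∂/∂p_i`. -/
def pD (p q : ℕ) (i : Fin (p + q)) : Module.End ℝ (W p q) where
  toFun f S := pderiv i (f S)
  map_add' f g := by funext S; simp
  map_smul' c f := by funext S; simp

/-- Exterior multiplication by the odd variable `ξ^i`. -/
def xiMul (p q : ℕ) (i : Fin (p + q)) : Module.End ℝ (W p q) where
  toFun f S := if i ∈ S then sgn p q i S • f (S.erase i) else 0
  map_add' f g := by funext S; by_cases h : i ∈ S <;> simp [h, smul_add]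
  map_smul' c f := by funext S; by_cases h : i ∈ S <;> simp [h, smul_smul, mul_comm]

/-- The odd superderivation `∂/∂ξ^i`, determined by `∂_{ξ^i}(ξ^j) = δ_i^j`. -/
def xiD (p q : ℕ) (i : Fin (p + q)) : Module.End ℝ (W p q) where
  toFun f S := if i ∈ S then 0 else sgn p q i (insert i S) • f (insert i S)
  map_add' f g := by funext S; by_cases h : i ∈ S <;> simp [h, smul_add]
  map_smul' c f := by funext S; by_cases h : i ∈ S <;> simp [h, smul_smul, mul_comm]

/-- `R`, multiplication by `η^{ij} p_i p_j`. -/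
def opR (p q : ℕ) : Module.End ℝ (W p q) := ∑ i, eta p q i • (pMul p q i * pMul p q i)

/-- The even Euler operator `ℰ = p_i ∂_{p_i}`. -/
def opE (p q : ℕ) : Module.End ℝ (W p q) := ∑ i, pMul p q i * pD p q i

/-- The trace operator `T = η_{ij} ∂_{p_i} ∂_{p_j}`. -/
def opT (p q : ℕ) : Module.End ℝ (W p q) := ∑ i, eta p q i • (pD p q i * pD p q i)

/-- The odd Euler operator `Σ = ξ^i ∂_{ξ^i}`. -/
def opS (p q : ℕ) : Module.End ℝ (W p q) := ∑ i, xiMul p q i * xiD p q i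

/-- `Q`, multiplication by `ξ^i p_i`. -/
def opQ (p q : ℕ) : Module.End ℝ (W p q) := ∑ i, xiMul p q i * pMul p q i

/-- `Q* = ∂_{ξ^i} ∂_{p_i}`. -/
def opQs (p q : ℕ) : Module.End ℝ (W p q) := ∑ i, xiD p q i * pD p q i

/-- The Koszul differential `δ = η_{ij} ξ^i ∂_{p_j}`. -/
def opd (p q : ℕ) : Module.End ℝ (W p q) := ∑ i, eta p q i • (xiMul p q i * pD p q i)

/-- The Koszul codifferential `δ* = η^{ij} p_i ∂_{ξ^j}`. -/
def opds (p q : ℕ) : Module.End ℝ (W p q) := ∑ i, eta p q i • (pMul p q i * xiD p q i)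

/-- The bihomogeneous component `W_{k,κ}`: polynomial degree `k` in the `p` variables and
exterior degree `κ` in the `ξ` variables. -/
def Wc (p q : ℕ) (k κ : ℕ) : Submodule ℝ (W p q) where
  carrier := { f | (∀ S, f S ∈ homogeneousSubmodule (Fin (p + q)) ℝ k) ∧
      ∀ S, S.card ≠ κ → f S = 0 }
  add_mem' := fun ha hb => ⟨fun S => add_mem (ha.1 S) (hb.1 S),
    fun S h => by simp [Pi.add_apply, ha.2 S h, hb.2 S h]⟩
  zero_mem' := ⟨fun S => zero_mem _, fun S _ => rfl⟩
  smul_mem' := fun c f hf => ⟨fun S => Submodule.smul_mem _ c (hf.1 S),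
    fun S h => by simp [Pi.smul_apply, hf.2 S h]⟩

/-- The component `W_{k,κ}` with integer indices, with the convention that it is the zero
subspace as soon as one of the indices is negative. -/
def WcZ (p q : ℕ) (k κ : ℤ) : Submodule ℝ (W p q) :=
  if 0 ≤ k ∧ 0 ≤ κ then Wc p q k.toNat κ.toNat else ⊥

/-- The commutator `[A,B] = AB − BA`. -/
def cm {p q : ℕ} (A B : Module.End ℝ (W p q)) : Module.End ℝ (W p q) := A * B - B * A

/-- The anticommutator `{A,B} = AB + BA`. -/
def acm {p q : ℕ} (A B : Module.End ℝ (W p q)) : Module.End ℝ (W p q) := A * B + B * A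

/-- `E = ℰ + (n/2)·id`. -/
def opEE (p q : ℕ) : Module.End ℝ (W p q) :=
  opE p q + (((p + q : ℕ) : ℝ) / 2) • (1 : Module.End ℝ (W p q))

/-- `𝗌 = Σ − (n/2)·id`. -/
def opSS (p q : ℕ) : Module.End ℝ (W p q) :=
  opS p q - (((p + q : ℕ) : ℝ) / 2) • (1 : Module.End ℝ (W p q))


/-! ### Auxiliary lemmas -/

section Aux

variable {p q : ℕ}

lemma sgn_insert_self (i : Fin (p + q)) (S : Finset (Fin (p + q))) :
    sgn p q i (insert i S) = sgn p q i S := by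
  simp [sgn, Finset.filter_insert]

lemma sgn_insert_of_not_lt {i j : Fin (p + q)} (S : Finset (Fin (p + q))) (h : ¬ j < i) :
    sgn p q i (insert j S) = sgn p q i S := by
  simp [sgn, Finset.filter_insert, h]

lemma sgn_insert_of_lt {i j : Fin (p + q)} (S : Finset (Fin (p + q))) (h : j < i) (hj : j ∉ S) :
    sgn p q i (insert j S) = - sgn p q i S := by
  have hj' : j ∉ S.filter (fun k => k < i) := by simp [hj]
  simp [sgn, Finset.filter_insert, h, Finset.card_insert_of_notMem hj', pow_succ]

lemma sgn_erase_of_not_lt {i j : Fin (p + q)} (S : Finset (Fin (p + q))) (h : ¬ j < i) :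
    sgn p q i (S.erase j) = sgn p q i S := by
  have : j ∉ S.filter (fun k => k < i) := by simp [h]
  simp [sgn, Finset.filter_erase, Finset.erase_eq_of_notMem this]

lemma sgn_erase_self (i : Fin (p + q)) (S : Finset (Fin (p + q))) :
    sgn p q i (S.erase i) = sgn p q i S :=
  sgn_erase_of_not_lt S (lt_irrefl i)

lemma sgn_erase_of_lt {i j : Fin (p + q)} (S : Finset (Fin (p + q))) (h : j < i) (hj : j ∈ S) :
    sgn p q i (S.erase j) = - sgn p q i S := by
  have hj' : j ∈ S.filter (fun k => k < i) := by simp [hj, h]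
  rw [sgn, sgn, Finset.filter_erase, ← Finset.card_erase_add_one hj', pow_succ]
  ring

lemma sgn_mul_self (i : Fin (p + q)) (S : Finset (Fin (p + q))) :
    sgn p q i S * sgn p q i S = 1 := by
  rw [sgn, ← pow_add]
  exact Even.neg_one_pow ⟨_, rfl⟩

lemma keyE {i j : Fin (p + q)} {S : Finset (Fin (p + q))} (hij : i ≠ j) (hi : i ∈ S)
    (hj : j ∈ S) :
    sgn p q i S * sgn p q j (S.erase i) = -(sgn p q j S * sgn p q i (S.erase j)) := by
  rcases lt_or_gt_of_ne hij with h | h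
  · rw [sgn_erase_of_lt S h hi, sgn_erase_of_not_lt S (asymm h)]; ring
  · rw [sgn_erase_of_not_lt S (asymm h), sgn_erase_of_lt S h hj]; ring

lemma keyI {i j : Fin (p + q)} {S : Finset (Fin (p + q))} (hij : i ≠ j) (hi : i ∉ S)
    (hj : j ∉ S) :
    sgn p q i S * sgn p q j (insert i S) = -(sgn p q j S * sgn p q i (insert j S)) := by
  rcases lt_or_gt_of_ne hij with h | h
  · rw [sgn_insert_of_lt S h hi, sgn_insert_of_not_lt S (asymm h)]; ring
  · rw [sgn_insert_of_not_lt S (asymm h), sgn_insert_of_lt S h hj]; ring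

lemma keyM {i j : Fin (p + q)} {S : Finset (Fin (p + q))} (hij : i ≠ j) (hi : i ∉ S)
    (hj : j ∈ S) :
    sgn p q i S * sgn p q j (insert i S) = -(sgn p q j S * sgn p q i (S.erase j)) := by
  rcases lt_or_gt_of_ne hij with h | h
  · rw [sgn_insert_of_lt S h hi, sgn_erase_of_not_lt S (asymm h)]; ring
  · rw [sgn_insert_of_not_lt S (asymm h), sgn_erase_of_lt S h hj]; ring

lemma pderiv_comm (i j : Fin (p + q)) (f : MvPolynomial (Fin (p + q)) ℝ) :
    pderiv i (pderiv j f) = pderiv j (pderiv i f) := by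
  induction f using MvPolynomial.induction_on' with
  | monomial s a =>
    by_cases h : i = j
    · subst h; rfl
    · simp only [pderiv_monomial]
      have h1 : (s - fun₀ | j => (1:ℕ)) i = s i := by
        simp [Finsupp.single_eq_of_ne h]
      have h2 : (s - fun₀ | i => (1:ℕ)) j = s j := by
        simp [Finsupp.single_eq_of_ne (Ne.symm h)]
      rw [h1, h2, tsub_right_comm]
      ring_nf
  | add f g hf hg => simp [hf, hg]

lemma pMul_apply (i : Fin (p + q)) (f : W p q) (S : Finset (Fin (p + q))) :
    pMul p q i f S = X i * f S := rfl

lemma pD_apply (i : Fin (p + q)) (f : W p q) (S : Finset (Fin (p + q))) :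
    pD p q i f S = pderiv i (f S) := rfl

lemma xiMul_apply (i : Fin (p + q)) (f : W p q) (S : Finset (Fin (p + q))) :
    xiMul p q i f S = if i ∈ S then sgn p q i S • f (S.erase i) else 0 := rfl

lemma xiD_apply (i : Fin (p + q)) (f : W p q) (S : Finset (Fin (p + q))) :
    xiD p q i f S = if i ∈ S then 0 else sgn p q i (insert i S) • f (insert i S) := rfl

/-! Basic relations among the generators. -/

lemma rel_AA (i j : Fin (p + q)) : pMul p q i * pMul p q j = pMul p q j * pMul p q i := by
  refine LinearMap.ext fun f => funext fun S => ?_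
  simp only [Module.End.mul_apply, pMul_apply]
  ring

lemma rel_DD (i j : Fin (p + q)) : pD p q i * pD p q j = pD p q j * pD p q i := by
  refine LinearMap.ext fun f => funext fun S => ?_
  simp only [Module.End.mul_apply, pD_apply]
  exact pderiv_comm i j (f S)

lemma rel_DA (i j : Fin (p + q)) :
    pD p q i * pMul p q j = pMul p q j * pD p q i + if i = j then 1 else 0 := by
  refine LinearMap.ext fun f => funext fun S => ?_
  simp only [LinearMap.add_apply, Module.End.mul_apply, pMul_apply, pD_apply, pderiv_mul]
  by_cases h : i = j
  · subst h; simp [Pi.add_apply, pMul_apply, pD_apply]; ring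
  · simp [Pi.add_apply, pderiv_X_of_ne (Ne.symm h), h, pMul_apply, pD_apply]

lemma rel_MA (i j : Fin (p + q)) : xiMul p q i * pMul p q j = pMul p q j * xiMul p q i := by
  refine LinearMap.ext fun f => funext fun S => ?_
  simp only [Module.End.mul_apply, pMul_apply, xiMul_apply]
  by_cases h : i ∈ S <;> simp [h, mul_smul_comm]

lemma rel_MD (i j : Fin (p + q)) : xiMul p q i * pD p q j = pD p q j * xiMul p q i := by
  refine LinearMap.ext fun f => funext fun S => ?_
  simp only [Module.End.mul_apply, pD_apply, xiMul_apply]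
  by_cases h : i ∈ S <;> simp [h]

lemma rel_NA (i j : Fin (p + q)) : xiD p q i * pMul p q j = pMul p q j * xiD p q i := by
  refine LinearMap.ext fun f => funext fun S => ?_
  simp only [Module.End.mul_apply, pMul_apply, xiD_apply]
  by_cases h : i ∈ S <;> simp [h, mul_smul_comm]

lemma rel_ND (i j : Fin (p + q)) : xiD p q i * pD p q j = pD p q j * xiD p q i := by
  refine LinearMap.ext fun f => funext fun S => ?_
  simp only [Module.End.mul_apply, pD_apply, xiD_apply]
  by_cases h : i ∈ S <;> simp [h]

lemma rel_MM_self (i : Fin (p + q)) : xiMul p q i * xiMul p q i = 0 := by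
  refine LinearMap.ext fun f => funext fun S => ?_
  simp only [Module.End.mul_apply, xiMul_apply]
  by_cases h : i ∈ S <;> simp [h]

lemma rel_NN_self (i : Fin (p + q)) : xiD p q i * xiD p q i = 0 := by
  refine LinearMap.ext fun f => funext fun S => ?_
  simp only [Module.End.mul_apply, xiD_apply]
  by_cases h : i ∈ S <;> simp [h]

lemma rel_MM (i j : Fin (p + q)) : xiMul p q i * xiMul p q j = -(xiMul p q j * xiMul p q i) := by
  by_cases hij : i = j
  · subst hij; rw [rel_MM_self]; simp
  refine LinearMap.ext fun f => funext fun S => ?_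
  simp only [Module.End.mul_apply, xiMul_apply, LinearMap.neg_apply, Pi.neg_apply]
  by_cases hi : i ∈ S <;> by_cases hj : j ∈ S
  · have hji : j ∈ S.erase i := Finset.mem_erase.2 ⟨Ne.symm hij, hj⟩
    have hij' : i ∈ S.erase j := Finset.mem_erase.2 ⟨hij, hi⟩
    simp only [hi, hj, hji, hij', if_true, smul_smul]
    rw [Finset.erase_right_comm, keyE hij hi hj]
    simp
  · have : j ∉ S.erase i := fun h => hj (Finset.mem_of_mem_erase h)
    simp [hi, hj, this]
  · have : i ∉ S.erase j := fun h => hi (Finset.mem_of_mem_erase h)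
    simp [hi, hj, this]
  · simp [hi, hj]

lemma rel_NN (i j : Fin (p + q)) : xiD p q i * xiD p q j = -(xiD p q j * xiD p q i) := by
  by_cases hij : i = j
  · subst hij; rw [rel_NN_self]; simp
  refine LinearMap.ext fun f => funext fun S => ?_
  simp only [Module.End.mul_apply, xiD_apply, LinearMap.neg_apply, Pi.neg_apply]
  by_cases hi : i ∈ S <;> by_cases hj : j ∈ S
  · simp [hi, hj]
  · have : i ∈ insert j S := Finset.mem_insert_of_mem hi
    simp [hi, hj, this]
  · have : j ∈ insert i S := Finset.mem_insert_of_mem hj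
    simp [hi, hj, this]
  · have hji : j ∉ insert i S := by simp [hi, hj, Ne.symm hij]
    have hij' : i ∉ insert j S := by simp [hi, hj, hij]
    simp only [hi, hj, hji, hij', if_false, smul_smul, sgn_insert_self]
    rw [keyI hij hi hj, Finset.insert_comm i j S]
    simp

lemma rel_NM (i j : Fin (p + q)) :
    xiD p q i * xiMul p q j + xiMul p q j * xiD p q i
      = if i = j then 1 else 0 := by
  by_cases hij : i = j
  · subst hij
    refine LinearMap.ext fun f => funext fun S => ?_
    simp only [LinearMap.add_apply, Module.End.mul_apply, xiMul_apply, xiD_apply, Pi.add_apply,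
      if_pos rfl]
    by_cases hi : i ∈ S
    · have h1 : i ∉ S.erase i := Finset.notMem_erase i S
      simp only [hi, if_true, h1, if_false, Finset.insert_erase hi, smul_smul, sgn_mul_self]
      simp
    · have h1 : i ∈ insert i S := Finset.mem_insert_self i S
      simp only [hi, if_false, h1, if_true, Finset.erase_insert hi, smul_smul,
        sgn_insert_self, sgn_mul_self]
      simp
  refine LinearMap.ext fun f => funext fun S => ?_
  simp only [LinearMap.add_apply, Module.End.mul_apply, xiMul_apply, xiD_apply, Pi.add_apply,
    if_neg hij]
  by_cases hi : i ∈ S <;> by_cases hj : j ∈ S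
  · have h1 : i ∈ S.erase j := Finset.mem_erase.2 ⟨hij, hi⟩
    simp [hi, hj, h1]
  · have h1 : i ∈ S.erase j := Finset.mem_erase.2 ⟨hij, hi⟩
    simp [hi, hj]
  · have h1 : j ∈ insert i S := Finset.mem_insert_of_mem hj
    have h2 : i ∉ S.erase j := fun h => hi (Finset.mem_of_mem_erase h)
    have h3 : (insert i S).erase j = insert i (S.erase j) := by
      rw [Finset.erase_insert_of_ne hij]
    simp only [hi, hj, h1, h2, if_true, if_false, smul_smul, h3, sgn_insert_self]
    rw [keyM hij hi hj]
    simp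
  · have h1 : j ∉ insert i S := by simp [hj, Ne.symm hij]
    simp [hi, hj, h1]

end Aux


/-! ### Abstract ring lemmas -/

section AbsRing
variable {R : Type*} [Ring R]

lemma comm_ore {a b : R} (h : a*b = b*a) (x : R) : a*(b*x) = b*(a*x) := by
  rw [← mul_assoc, h, mul_assoc]
lemma weyl_ore {a d : R} (h : d*a = a*d + 1) (x : R) : d*(a*x) = a*(d*x) + x := by
  rw [← mul_assoc, h, add_mul, one_mul, mul_assoc]
lemma anti_ore {a b : R} (h : a*b = -(b*a)) (x : R) : a*(b*x) = -(b*(a*x)) := by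
  rw [← mul_assoc, h, neg_mul, mul_assoc]
lemma cliff_ore {m n : R} (h : n*m = 1 - m*n) (x : R) : n*(m*x) = x - m*(n*x) := by
  rw [← mul_assoc, h, sub_mul, one_mul, mul_assoc]

lemma cm_comm4 (x y u v : R) (hxu : x*u = u*x) (hxv : x*v = v*x) (hyu : y*u = u*y)
    (hyv : y*v = v*y) : (x*y)*(u*v) - (u*v)*(x*y) = 0 := by
  noncomm_ring [comm_ore hxu, comm_ore hxv, comm_ore hyu, comm_ore hyv, hxu, hxv, hyu, hyv]

lemma cmL1 (a d : R) (h : d*a = a*d + 1) : (a*d)*(a*a) - (a*a)*(a*d) = a*a + a*a := by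
  noncomm_ring [weyl_ore h, h]

lemma cmL2 (a d : R) (h : d*a = a*d + 1) : (a*d)*(d*d) - (d*d)*(a*d) = -(d*d + d*d) := by
  noncomm_ring [weyl_ore h, h]

lemma cmL3 (a d : R) (h : d*a = a*d + 1) :
    (d*d)*(a*a) - (a*a)*(d*d) = ((a*d + a*d) + (a*d + a*d)) + (1 + 1) := by
  noncomm_ring [weyl_ore h, h]

lemma cmL5 (a d m : R) (h : d*a = a*d + 1) (hma : m*a = a*m) (hmd : m*d = d*m) :
    (a*a)*(m*d) - (m*d)*(a*a) = -((m*a) + (m*a)) := by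
  noncomm_ring [weyl_ore h, h, comm_ore hma, comm_ore hmd, hma, hmd]

lemma cmL6 (a d n : R) (h : d*a = a*d + 1) (hna : n*a = a*n) (hnd : n*d = d*n) :
    (a*a)*(n*d) - (n*d)*(a*a) = -((a*n) + (a*n)) := by
  noncomm_ring [weyl_ore h, h, comm_ore hna, comm_ore hnd, hna, hnd]

lemma cmL9 (a d n : R) (h : d*a = a*d + 1) (hna : n*a = a*n) (hnd : n*d = d*n) :
    (d*d)*(a*n) - (a*n)*(d*d) = (n*d) + (n*d) := by
  noncomm_ring [weyl_ore h, h, comm_ore hna, comm_ore hnd, hna, hnd]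

lemma cmL10 (a d m : R) (h : d*a = a*d + 1) (hma : m*a = a*m) (hmd : m*d = d*m) :
    (d*d)*(m*a) - (m*a)*(d*d) = (m*d) + (m*d) := by
  noncomm_ring [weyl_ore h, h, comm_ore hma, comm_ore hmd, hma, hmd]

lemma cmL13 (a d m : R) (h : d*a = a*d + 1) (hma : m*a = a*m) (hmd : m*d = d*m) :
    (a*d)*(m*d) - (m*d)*(a*d) = -(m*d) := by
  noncomm_ring [weyl_ore h, h, comm_ore hma, comm_ore hmd, hma, hmd]

lemma cmL14 (a d n : R) (h : d*a = a*d + 1) (hna : n*a = a*n) (hnd : n*d = d*n) :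
    (a*d)*(a*n) - (a*n)*(a*d) = a*n := by
  noncomm_ring [weyl_ore h, h, comm_ore hna, comm_ore hnd, hna, hnd]

lemma cmL15 (a d m : R) (h : d*a = a*d + 1) (hma : m*a = a*m) (hmd : m*d = d*m) :
    (a*d)*(m*a) - (m*a)*(a*d) = m*a := by
  noncomm_ring [weyl_ore h, h, comm_ore hma, comm_ore hmd, hma, hmd]

lemma cmL16 (a d n : R) (h : d*a = a*d + 1) (hna : n*a = a*n) (hnd : n*d = d*n) :
    (a*d)*(n*d) - (n*d)*(a*d) = -(n*d) := by
  noncomm_ring [weyl_ore h, h, comm_ore hna, comm_ore hnd, hna, hnd]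

lemma cmL17 (m n t : R) (hnm : n*m = 1 - m*n) (hmm : m*m = 0) (hmt : m*t = t*m)
    (hnt : n*t = t*n) : (m*n)*(m*t) - (m*t)*(m*n) = m*t := by
  noncomm_ring [cliff_ore hnm, hnm, comm_ore hmt, comm_ore hnt, hmt, hnt, hmm,
    show ∀ x, m*(m*x) = 0 from fun x => by rw [← mul_assoc, hmm, zero_mul]]

lemma cmL18 (m n t : R) (hnm : n*m = 1 - m*n) (hnn : n*n = 0) (hmt : m*t = t*m)
    (hnt : n*t = t*n) : (m*n)*(t*n) - (t*n)*(m*n) = -(t*n) := by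
  noncomm_ring [cliff_ore hnm, hnm, comm_ore hmt, comm_ore hnt, hmt, hnt, hnn,
    show ∀ x, n*(n*x) = 0 from fun x => by rw [← mul_assoc, hnn, zero_mul]]

lemma cmL22 (m n t : R) (hnm : n*m = 1 - m*n) (hnn : n*n = 0) (hmt : m*t = t*m)
    (hnt : n*t = t*n) : (m*n)*(n*t) - (n*t)*(m*n) = -(n*t) := by
  noncomm_ring [cliff_ore hnm, hnm, comm_ore hmt, comm_ore hnt, hmt, hnt, hnn,
    show ∀ x, n*(n*x) = 0 from fun x => by rw [← mul_assoc, hnn, zero_mul]]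

lemma cmL17' (m n m' t : R) (hnm : n*m' = -(m'*n)) (hmm : m*m' = -(m'*m))
    (hmt : m*t = t*m) (hnt : n*t = t*n) (hm't : m'*t = t*m') :
    (m*n)*(m'*t) - (m'*t)*(m*n) = 0 := by
  noncomm_ring [anti_ore hnm, anti_ore hmm, hnm, hmm, comm_ore hmt, comm_ore hnt,
    comm_ore hm't, hmt, hnt, hm't]

lemma cmL18' (m n n' t : R) (hn'm : n'*m = -(m*n')) (hnn : n*n' = -(n'*n))
    (hmt : m*t = t*m) (hnt : n*t = t*n) (hn't : n'*t = t*n') :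
    (m*n)*(t*n') - (t*n')*(m*n) = 0 := by
  noncomm_ring [anti_ore hn'm, anti_ore hnn, hn'm, hnn, comm_ore hmt, comm_ore hnt,
    comm_ore hn't, hmt, hnt, hn't]

lemma cmL22' (m n n' t : R) (hn'm : n'*m = -(m*n')) (hnn : n*n' = -(n'*n))
    (hmt : m*t = t*m) (hnt : n*t = t*n) (hn't : n'*t = t*n') :
    (m*n)*(n'*t) - (n'*t)*(m*n) = 0 := by
  noncomm_ring [anti_ore hn'm, anti_ore hnn, hn'm, hnn, comm_ore hmt, comm_ore hnt,
    comm_ore hn't, hmt, hnt, hn't]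

lemma sq_anti (m m' d e : R) (hmm : m*m' = -(m'*m)) (hde : d*e = e*d)
    (hm'd : m'*d = d*m') (hme : m*e = e*m) :
    (m*d)*(m'*e) = -((m'*e)*(m*d)) := by
  noncomm_ring [anti_ore hmm, hmm, comm_ore hm'd.symm, comm_ore hme.symm,
    hm'd.symm, hme.symm, comm_ore hde, hde]

lemma sq_anti2 (a n b n' : R) (hnn' : n*n' = -(n'*n)) (hab : a*b = b*a)
    (hbn : n*b = b*n) (han' : n'*a = a*n') :
    (a*n)*(b*n') = -((b*n')*(a*n)) := by
  noncomm_ring [comm_ore hbn, comm_ore han', comm_ore hab, anti_ore hnn', hnn',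
    hbn, han', hab]

lemma acmP25 (a d m n : R) (h : d*a = a*d + 1) (hnm : n*m = 1 - m*n)
    (hma : m*a = a*m) (hnd : n*d = d*n) :
    (m*d)*(a*n) + (a*n)*(m*d) = m*n + a*d := by
  noncomm_ring [weyl_ore h, h, cliff_ore hnm, hnm, comm_ore hma, comm_ore hnd, hma, hnd]

lemma acmP25' (m d b n' : R) (hdb : d*b = b*d) (hn'm : n'*m = -(m*n'))
    (hmb : m*b = b*m) (hn'd : n'*d = d*n') :
    (m*d)*(b*n') + (b*n')*(m*d) = 0 := by
  noncomm_ring [comm_ore hdb, hdb, anti_ore hn'm, hn'm, comm_ore hmb, comm_ore hn'd.symm,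
    hmb, hn'd.symm]

lemma acmP26 (a d m n : R) (h : d*a = a*d + 1) (hnm : n*m = 1 - m*n)
    (hna : n*a = a*n) (hmd : m*d = d*m) :
    (m*a)*(n*d) + (n*d)*(m*a) = a*d + 1 - m*n := by
  noncomm_ring [weyl_ore h, h, cliff_ore hnm, hnm, comm_ore hna.symm, comm_ore hmd.symm,
    hna.symm, hmd.symm]

lemma acmP26' (m a n' e : R) (hea : e*a = a*e) (hn'm : n'*m = -(m*n'))
    (hn'a : n'*a = a*n') (hme : m*e = e*m) :
    (m*a)*(n'*e) + (n'*e)*(m*a) = 0 := by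
  noncomm_ring [comm_ore hea, hea, anti_ore hn'm, hn'm, comm_ore hn'a.symm,
    comm_ore hme.symm, hn'a.symm, hme.symm]

lemma acmP27 (d m n : R) (hnm : n*m = 1 - m*n) (hmd : m*d = d*m) (hnd : n*d = d*n) :
    (m*d)*(n*d) + (n*d)*(m*d) = d*d := by
  noncomm_ring [cliff_ore hnm, hnm, comm_ore hmd, comm_ore hnd, hmd, hnd]

lemma acmP27' (m d n' e : R) (hde : d*e = e*d) (hn'm : n'*m = -(m*n'))
    (hn'd : n'*d = d*n') (hme : m*e = e*m) :
    (m*d)*(n'*e) + (n'*e)*(m*d) = 0 := by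
  noncomm_ring [comm_ore hde, hde, anti_ore hn'm, hn'm, comm_ore hn'd.symm,
    comm_ore hme.symm, hn'd.symm, hme.symm]

lemma acmP28 (a m n : R) (hnm : n*m = 1 - m*n) (hma : m*a = a*m) (hna : n*a = a*n) :
    (a*n)*(m*a) + (m*a)*(a*n) = a*a := by
  noncomm_ring [cliff_ore hnm, hnm, comm_ore hma, comm_ore hna, hma, hna]

lemma acmP28' (a n m' b : R) (hab : a*b = b*a) (hnm' : n*m' = -(m'*n))
    (hm'a : m'*a = a*m') (hnb : n*b = b*n) :
    (a*n)*(m'*b) + (m'*b)*(a*n) = 0 := by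
  noncomm_ring [anti_ore hnm', hnm', comm_ore hab.symm, comm_ore hnb.symm,
    comm_ore hm'a, hab.symm, hnb.symm, hm'a]

lemma acmP29 (m d b : R) (hmm : m*m = 0) (hmd : m*d = d*m) (hmb : m*b = b*m) :
    (m*d)*(m*b) + (m*b)*(m*d) = 0 := by
  noncomm_ring [comm_ore hmd.symm, comm_ore hmb.symm, hmd.symm, hmb.symm, hmm,
    show ∀ x, m*(m*x) = 0 from fun x => by rw [← mul_assoc, hmm, zero_mul]]

lemma acmP29' (m d m' b : R) (hmm' : m*m' = -(m'*m)) (hdb : d*b = b*d)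
    (hm'd : m'*d = d*m') (hmb : m*b = b*m) :
    (m*d)*(m'*b) + (m'*b)*(m*d) = 0 := by
  noncomm_ring [anti_ore hmm', hmm', comm_ore hm'd.symm, comm_ore hmb.symm,
    hm'd.symm, hmb.symm, comm_ore hdb, hdb]

lemma acmP30 (a d n : R) (h : d*a = a*d + 1) (hnn : n*n = 0) (hna : n*a = a*n)
    (hnd : n*d = d*n) : (a*n)*(n*d) + (n*d)*(a*n) = 0 := by
  noncomm_ring [weyl_ore h, h, comm_ore hna, comm_ore hnd, hna, hnd, hnn,
    show ∀ x, n*(n*x) = 0 from fun x => by rw [← mul_assoc, hnn, zero_mul]]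

lemma acmP30' (a n n' e : R) (hea : e*a = a*e) (hnn' : n*n' = -(n'*n))
    (hn'a : n'*a = a*n') (hne : n*e = e*n) :
    (a*n)*(n'*e) + (n'*e)*(a*n) = 0 := by
  noncomm_ring [anti_ore hnn', hnn', comm_ore hn'a.symm, comm_ore hne, hn'a.symm, hne,
    comm_ore hea, hea]

end AbsRing

/-! ### Convenient forms of the generator relations -/

section Rels
variable {p q : ℕ}

lemma rel_DA_self (i : Fin (p + q)) :
    pD p q i * pMul p q i = pMul p q i * pD p q i + 1 := by
  have := rel_DA i i; rwa [if_pos rfl] at this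

lemma rel_DA_ne {i j : Fin (p + q)} (h : i ≠ j) :
    pD p q i * pMul p q j = pMul p q j * pD p q i := by
  have := rel_DA i j; rwa [if_neg h, add_zero] at this

lemma rel_AD_ne {i j : Fin (p + q)} (h : i ≠ j) :
    pMul p q i * pD p q j = pD p q j * pMul p q i :=
  (rel_DA_ne (Ne.symm h)).symm

lemma rel_NM_self (i : Fin (p + q)) :
    xiD p q i * xiMul p q i = 1 - xiMul p q i * xiD p q i := by
  have := rel_NM i i; rw [if_pos rfl] at this
  exact eq_sub_of_add_eq this

lemma rel_NM_ne {i j : Fin (p + q)} (h : i ≠ j) :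
    xiD p q i * xiMul p q j = -(xiMul p q j * xiD p q i) := by
  have := rel_NM i j; rw [if_neg h] at this
  exact eq_neg_of_add_eq_zero_left this

end Rels

/-! ### Summation framework -/

section Frame
variable {p q : ℕ}

lemma eta_mul_self (i : Fin (p + q)) : eta p q i * eta p q i = 1 := by
  unfold eta; split <;> norm_num

lemma mul_sum_sum (c d : Fin (p + q) → ℝ) (F G : Fin (p + q) → Module.End ℝ (W p q)) :
    (∑ i, c i • F i) * (∑ j, d j • G j) = ∑ i, ∑ j, (c i * d j) • (F i * G j) := by
  rw [Finset.sum_mul_sum]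
  exact Finset.sum_congr rfl fun i _ => Finset.sum_congr rfl fun j _ => by
    rw [smul_mul_assoc, mul_smul_comm, smul_smul]

lemma cm_sum_sum (c d : Fin (p + q) → ℝ) (F G : Fin (p + q) → Module.End ℝ (W p q)) :
    cm (∑ i, c i • F i) (∑ j, d j • G j) = ∑ i, ∑ j, (c i * d j) • cm (F i) (G j) := by
  rw [cm, mul_sum_sum, mul_sum_sum,
    show (∑ j, ∑ i, (d j * c i) • (G j * F i)) = ∑ i, ∑ j, (d j * c i) • (G j * F i) from
      Finset.sum_comm, ← Finset.sum_sub_distrib]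
  refine Finset.sum_congr rfl fun i _ => ?_
  rw [← Finset.sum_sub_distrib]
  refine Finset.sum_congr rfl fun j _ => ?_
  rw [cm, smul_sub, mul_comm (d j) (c i)]

lemma acm_sum_sum (c d : Fin (p + q) → ℝ) (F G : Fin (p + q) → Module.End ℝ (W p q)) :
    acm (∑ i, c i • F i) (∑ j, d j • G j) = ∑ i, ∑ j, (c i * d j) • acm (F i) (G j) := by
  rw [acm, mul_sum_sum, mul_sum_sum,
    show (∑ j, ∑ i, (d j * c i) • (G j * F i)) = ∑ i, ∑ j, (d j * c i) • (G j * F i) from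
      Finset.sum_comm, ← Finset.sum_add_distrib]
  refine Finset.sum_congr rfl fun i _ => ?_
  rw [← Finset.sum_add_distrib]
  refine Finset.sum_congr rfl fun j _ => ?_
  rw [acm, smul_add, mul_comm (d j) (c i)]

lemma sum_antisym (F : Fin (p + q) → Fin (p + q) → Module.End ℝ (W p q))
    (h : ∀ i j, F i j = -(F j i)) : (∑ i, ∑ j, F i j) = 0 := by
  have h1 : (∑ i, ∑ j, F i j) + (∑ i, ∑ j, F i j) = 0 := by
    nth_rewrite 2 [Finset.sum_comm]
    rw [← Finset.sum_add_distrib]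
    refine Finset.sum_eq_zero fun i _ => ?_
    rw [← Finset.sum_add_distrib]
    refine Finset.sum_eq_zero fun j _ => ?_
    rw [h i j]; exact neg_add_cancel _
  have h2 : (2:ℝ) • (∑ i, ∑ j, F i j) = 0 := by rw [two_smul]; exact h1
  have := congrArg (fun z => (2:ℝ)⁻¹ • z) h2
  simpa [smul_smul] using this

lemma sum_diag (c d : Fin (p + q) → ℝ) (G : Fin (p + q) → Module.End ℝ (W p q)) :
    (∑ i, ∑ j, (c i * d j) • (if i = j then G i else 0)) = ∑ i, (c i * d i) • G i := by
  refine Finset.sum_congr rfl fun i _ => ?_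
  have : ∀ j, (c i * d j) • (if i = j then G i else 0)
      = if i = j then (c i * d j) • G i else 0 := by
    intro j; split <;> simp
  simp only [this]
  simp [Finset.sum_ite_eq]

lemma cm_addl (A C B : Module.End ℝ (W p q)) : cm (A + C) B = cm A B + cm C B := by
  simp only [cm, add_mul, mul_add]; abel

lemma cm_subl (A C B : Module.End ℝ (W p q)) : cm (A - C) B = cm A B - cm C B := by
  simp only [cm, sub_mul, mul_sub]; abel

lemma cm_addr (A B C : Module.End ℝ (W p q)) : cm A (B + C) = cm A B + cm A C := by
  simp only [cm, add_mul, mul_add]; abel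

lemma cm_smul_one_l (r : ℝ) (B : Module.End ℝ (W p q)) : cm (r • 1) B = 0 := by
  simp [cm, smul_mul_assoc, mul_smul_comm]

lemma cm_smul_one_r (r : ℝ) (A : Module.End ℝ (W p q)) : cm A (r • 1) = 0 := by
  simp [cm, smul_mul_assoc, mul_smul_comm]

lemma opE_eq : opE p q = ∑ i, (1:ℝ) • (pMul p q i * pD p q i) := by simp [opE]
lemma opS_eq : opS p q = ∑ i, (1:ℝ) • (xiMul p q i * xiD p q i) := by simp [opS]
lemma opQ_eq : opQ p q = ∑ i, (1:ℝ) • (xiMul p q i * pMul p q i) := by simp [opQ]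
lemma opQs_eq : opQs p q = ∑ i, (1:ℝ) • (xiD p q i * pD p q i) := by simp [opQs]

end Frame

/-! ### The individual relations -/

section TheRels
variable (p q : ℕ)

lemma relER : cm (opEE p q) (opR p q) = (2:ℝ) • opR p q := by
  rw [opEE, cm_addl, cm_smul_one_l, add_zero, opE_eq, opR, cm_sum_sum]
  have hs : ∀ i j : Fin (p + q), cm (pMul p q i * pD p q i) (pMul p q j * pMul p q j)
      = if i = j then pMul p q i * pMul p q i + pMul p q i * pMul p q i else 0 := by
    intro i j
    by_cases h : i = j
    · subst h; rw [if_pos rfl, cm]; exact cmL1 _ _ (rel_DA_self i)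
    · rw [if_neg h, cm]
      exact cm_comm4 _ _ _ _ (rel_AA i j) (rel_AA i j) (rel_DA_ne h) (rel_DA_ne h)
  simp only [hs]
  rw [sum_diag, Finset.smul_sum]
  refine Finset.sum_congr rfl fun i _ => ?_
  module

lemma relET : cm (opEE p q) (opT p q) = (-2:ℝ) • opT p q := by
  rw [opEE, cm_addl, cm_smul_one_l, add_zero, opE_eq, opT, cm_sum_sum]
  have hs : ∀ i j : Fin (p + q), cm (pMul p q i * pD p q i) (pD p q j * pD p q j)
      = if i = j then -(pD p q i * pD p q i + pD p q i * pD p q i) else 0 := by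
    intro i j
    by_cases h : i = j
    · subst h; rw [if_pos rfl, cm]; exact cmL2 _ _ (rel_DA_self i)
    · rw [if_neg h, cm]
      exact cm_comm4 _ _ _ _ (rel_AD_ne h) (rel_AD_ne h) (rel_DD i j) (rel_DD i j)
  simp only [hs]
  rw [sum_diag, Finset.smul_sum]
  refine Finset.sum_congr rfl fun i _ => ?_
  module

lemma relTR : cm (opT p q) (opR p q) = (4:ℝ) • opEE p q := by
  rw [opT, opR, cm_sum_sum]
  have hs : ∀ i j : Fin (p + q), cm (pD p q i * pD p q i) (pMul p q j * pMul p q j)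
      = if i = j then ((pMul p q i * pD p q i + pMul p q i * pD p q i)
          + (pMul p q i * pD p q i + pMul p q i * pD p q i)) + (1 + 1) else 0 := by
    intro i j
    by_cases h : i = j
    · subst h; rw [if_pos rfl, cm]; exact cmL3 _ _ (rel_DA_self i)
    · rw [if_neg h, cm]
      exact cm_comm4 _ _ _ _ (rel_DA_ne h) (rel_DA_ne h) (rel_DA_ne h) (rel_DA_ne h)
  simp only [hs]
  rw [sum_diag]
  simp only [eta_mul_self, one_smul]
  simp only [Finset.sum_add_distrib, Finset.sum_const, Finset.card_univ, Fintype.card_fin]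
  rw [opEE, opE, ← Nat.cast_smul_eq_nsmul ℝ]
  module

lemma relSR : cm (opSS p q) (opR p q) = 0 := by
  rw [opSS, cm_subl, cm_smul_one_l, sub_zero, opS_eq, opR, cm_sum_sum]
  have hs : ∀ i j : Fin (p + q), cm (xiMul p q i * xiD p q i) (pMul p q j * pMul p q j)
      = 0 := fun i j => by
    rw [cm]
    exact cm_comm4 _ _ _ _ (rel_MA i j) (rel_MA i j) (rel_NA i j) (rel_NA i j)
  simp [hs]

lemma relSE : cm (opSS p q) (opEE p q) = 0 := by
  rw [opSS, cm_subl, cm_smul_one_l, sub_zero, opEE, cm_addr, cm_smul_one_r, add_zero,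
    opS_eq, opE_eq, cm_sum_sum]
  have hs : ∀ i j : Fin (p + q), cm (xiMul p q i * xiD p q i) (pMul p q j * pD p q j)
      = 0 := fun i j => by
    rw [cm]
    exact cm_comm4 _ _ _ _ (rel_MA i j) (rel_MD i j) (rel_NA i j) (rel_ND i j)
  simp [hs]

lemma relST : cm (opSS p q) (opT p q) = 0 := by
  rw [opSS, cm_subl, cm_smul_one_l, sub_zero, opS_eq, opT, cm_sum_sum]
  have hs : ∀ i j : Fin (p + q), cm (xiMul p q i * xiD p q i) (pD p q j * pD p q j)
      = 0 := fun i j => by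
    rw [cm]
    exact cm_comm4 _ _ _ _ (rel_MD i j) (rel_MD i j) (rel_ND i j) (rel_ND i j)
  simp [hs]

lemma relRd : cm (opR p q) (opd p q) = (-2:ℝ) • opQ p q := by
  rw [opR, opd, cm_sum_sum]
  have hs : ∀ i j : Fin (p + q), cm (pMul p q i * pMul p q i) (xiMul p q j * pD p q j)
      = if i = j then -(xiMul p q i * pMul p q i + xiMul p q i * pMul p q i) else 0 := by
    intro i j
    by_cases h : i = j
    · subst h; rw [if_pos rfl, cm]
      exact cmL5 _ _ _ (rel_DA_self i) (rel_MA i i) (rel_MD i i)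
    · rw [if_neg h, cm]
      exact cm_comm4 _ _ _ _ ((rel_MA j i).symm) (rel_AD_ne h)
        ((rel_MA j i).symm) (rel_AD_ne h)
  simp only [hs]
  rw [sum_diag, opQ, Finset.smul_sum]
  refine Finset.sum_congr rfl fun i _ => ?_
  rw [eta_mul_self]
  module

lemma relRQs : cm (opR p q) (opQs p q) = (-2:ℝ) • opds p q := by
  rw [opR, opQs_eq, cm_sum_sum]
  have hs : ∀ i j : Fin (p + q), cm (pMul p q i * pMul p q i) (xiD p q j * pD p q j)
      = if i = j then -(pMul p q i * xiD p q i + pMul p q i * xiD p q i) else 0 := by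
    intro i j
    by_cases h : i = j
    · subst h; rw [if_pos rfl, cm]
      exact cmL6 _ _ _ (rel_DA_self i) (rel_NA i i) (rel_ND i i)
    · rw [if_neg h, cm]
      exact cm_comm4 _ _ _ _ ((rel_NA j i).symm) (rel_AD_ne h)
        ((rel_NA j i).symm) (rel_AD_ne h)
  simp only [hs]
  rw [sum_diag, opds, Finset.smul_sum]
  refine Finset.sum_congr rfl fun i _ => ?_
  module

lemma relRQ : cm (opR p q) (opQ p q) = 0 := by
  rw [opR, opQ_eq, cm_sum_sum]
  have hs : ∀ i j : Fin (p + q), cm (pMul p q i * pMul p q i) (xiMul p q j * pMul p q j)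
      = 0 := fun i j => by
    rw [cm]
    exact cm_comm4 _ _ _ _ ((rel_MA j i).symm) (rel_AA i j) ((rel_MA j i).symm) (rel_AA i j)
  simp [hs]

lemma relRds : cm (opR p q) (opds p q) = 0 := by
  rw [opR, opds, cm_sum_sum]
  have hs : ∀ i j : Fin (p + q), cm (pMul p q i * pMul p q i) (pMul p q j * xiD p q j)
      = 0 := fun i j => by
    rw [cm]
    exact cm_comm4 _ _ _ _ (rel_AA i j) ((rel_NA j i).symm) (rel_AA i j) ((rel_NA j i).symm)
  simp [hs]

lemma relTds : cm (opT p q) (opds p q) = (2:ℝ) • opQs p q := by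
  rw [opT, opds, cm_sum_sum]
  have hs : ∀ i j : Fin (p + q), cm (pD p q i * pD p q i) (pMul p q j * xiD p q j)
      = if i = j then xiD p q i * pD p q i + xiD p q i * pD p q i else 0 := by
    intro i j
    by_cases h : i = j
    · subst h; rw [if_pos rfl, cm]
      exact cmL9 _ _ _ (rel_DA_self i) (rel_NA i i) (rel_ND i i)
    · rw [if_neg h, cm]
      exact cm_comm4 _ _ _ _ (rel_DA_ne h) ((rel_ND j i).symm)
        (rel_DA_ne h) ((rel_ND j i).symm)
  simp only [hs]
  rw [sum_diag, opQs, Finset.smul_sum]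
  refine Finset.sum_congr rfl fun i _ => ?_
  rw [eta_mul_self]
  module

lemma relTQ : cm (opT p q) (opQ p q) = (2:ℝ) • opd p q := by
  rw [opT, opQ_eq, cm_sum_sum]
  have hs : ∀ i j : Fin (p + q), cm (pD p q i * pD p q i) (xiMul p q j * pMul p q j)
      = if i = j then xiMul p q i * pD p q i + xiMul p q i * pD p q i else 0 := by
    intro i j
    by_cases h : i = j
    · subst h; rw [if_pos rfl, cm]
      exact cmL10 _ _ _ (rel_DA_self i) (rel_MA i i) (rel_MD i i)
    · rw [if_neg h, cm]
      exact cm_comm4 _ _ _ _ ((rel_MD j i).symm) (rel_DA_ne h)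
        ((rel_MD j i).symm) (rel_DA_ne h)
  simp only [hs]
  rw [sum_diag, opd, Finset.smul_sum]
  refine Finset.sum_congr rfl fun i _ => ?_
  module

lemma relTd : cm (opT p q) (opd p q) = 0 := by
  rw [opT, opd, cm_sum_sum]
  have hs : ∀ i j : Fin (p + q), cm (pD p q i * pD p q i) (xiMul p q j * pD p q j)
      = 0 := fun i j => by
    rw [cm]
    exact cm_comm4 _ _ _ _ ((rel_MD j i).symm) (rel_DD i j) ((rel_MD j i).symm) (rel_DD i j)
  simp [hs]

lemma relTQs : cm (opT p q) (opQs p q) = 0 := by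
  rw [opT, opQs_eq, cm_sum_sum]
  have hs : ∀ i j : Fin (p + q), cm (pD p q i * pD p q i) (xiD p q j * pD p q j)
      = 0 := fun i j => by
    rw [cm]
    exact cm_comm4 _ _ _ _ ((rel_ND j i).symm) (rel_DD i j) ((rel_ND j i).symm) (rel_DD i j)
  simp [hs]

lemma relEd : cm (opEE p q) (opd p q) = - opd p q := by
  rw [opEE, cm_addl, cm_smul_one_l, add_zero, opE_eq, opd, cm_sum_sum]
  have hs : ∀ i j : Fin (p + q), cm (pMul p q i * pD p q i) (xiMul p q j * pD p q j)
      = if i = j then -(xiMul p q i * pD p q i) else 0 := by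
    intro i j
    by_cases h : i = j
    · subst h; rw [if_pos rfl, cm]
      exact cmL13 _ _ _ (rel_DA_self i) (rel_MA i i) (rel_MD i i)
    · rw [if_neg h, cm]
      exact cm_comm4 _ _ _ _ ((rel_MA j i).symm) (rel_AD_ne h)
        ((rel_MD j i).symm) (rel_DD i j)
  simp only [hs]
  rw [sum_diag, ← Finset.sum_neg_distrib]
  refine Finset.sum_congr rfl fun i _ => ?_
  module

lemma relEds : cm (opEE p q) (opds p q) = opds p q := by
  rw [opEE, cm_addl, cm_smul_one_l, add_zero, opE_eq, opds, cm_sum_sum]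
  have hs : ∀ i j : Fin (p + q), cm (pMul p q i * pD p q i) (pMul p q j * xiD p q j)
      = if i = j then pMul p q i * xiD p q i else 0 := by
    intro i j
    by_cases h : i = j
    · subst h; rw [if_pos rfl, cm]
      exact cmL14 _ _ _ (rel_DA_self i) (rel_NA i i) (rel_ND i i)
    · rw [if_neg h, cm]
      exact cm_comm4 _ _ _ _ (rel_AA i j) ((rel_NA j i).symm)
        (rel_DA_ne h) ((rel_ND j i).symm)
  simp only [hs]
  rw [sum_diag]
  refine Finset.sum_congr rfl fun i _ => ?_
  module

lemma relEQ : cm (opEE p q) (opQ p q) = opQ p q := by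
  rw [opEE, cm_addl, cm_smul_one_l, add_zero, opE_eq, opQ_eq, cm_sum_sum]
  have hs : ∀ i j : Fin (p + q), cm (pMul p q i * pD p q i) (xiMul p q j * pMul p q j)
      = if i = j then xiMul p q i * pMul p q i else 0 := by
    intro i j
    by_cases h : i = j
    · subst h; rw [if_pos rfl, cm]
      exact cmL15 _ _ _ (rel_DA_self i) (rel_MA i i) (rel_MD i i)
    · rw [if_neg h, cm]
      exact cm_comm4 _ _ _ _ ((rel_MA j i).symm) (rel_AA i j)
        ((rel_MD j i).symm) (rel_DA_ne h)
  simp only [hs]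
  rw [sum_diag]
  refine Finset.sum_congr rfl fun i _ => ?_
  module

lemma relEQs : cm (opEE p q) (opQs p q) = - opQs p q := by
  rw [opEE, cm_addl, cm_smul_one_l, add_zero, opE_eq, opQs_eq, cm_sum_sum]
  have hs : ∀ i j : Fin (p + q), cm (pMul p q i * pD p q i) (xiD p q j * pD p q j)
      = if i = j then -(xiD p q i * pD p q i) else 0 := by
    intro i j
    by_cases h : i = j
    · subst h; rw [if_pos rfl, cm]
      exact cmL16 _ _ _ (rel_DA_self i) (rel_NA i i) (rel_ND i i)
    · rw [if_neg h, cm]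
      exact cm_comm4 _ _ _ _ ((rel_NA j i).symm) (rel_AD_ne h)
        ((rel_ND j i).symm) (rel_DD i j)
  simp only [hs]
  rw [sum_diag, ← Finset.sum_neg_distrib]
  refine Finset.sum_congr rfl fun i _ => ?_
  module

lemma relSd : cm (opSS p q) (opd p q) = opd p q := by
  rw [opSS, cm_subl, cm_smul_one_l, sub_zero, opS_eq, opd, cm_sum_sum]
  have hs : ∀ i j : Fin (p + q), cm (xiMul p q i * xiD p q i) (xiMul p q j * pD p q j)
      = if i = j then xiMul p q i * pD p q i else 0 := by
    intro i j
    by_cases h : i = j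
    · subst h; rw [if_pos rfl, cm]
      exact cmL17 _ _ _ (rel_NM_self i) (rel_MM_self i) (rel_MD i i) (rel_ND i i)
    · rw [if_neg h, cm]
      exact cmL17' _ _ _ _ (rel_NM_ne h) (rel_MM i j) (rel_MD i j) (rel_ND i j)
        (rel_MD j j)
  simp only [hs]
  rw [sum_diag]
  refine Finset.sum_congr rfl fun i _ => ?_
  module

lemma relSds : cm (opSS p q) (opds p q) = - opds p q := by
  rw [opSS, cm_subl, cm_smul_one_l, sub_zero, opS_eq, opds, cm_sum_sum]
  have hs : ∀ i j : Fin (p + q), cm (xiMul p q i * xiD p q i) (pMul p q j * xiD p q j)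
      = if i = j then -(pMul p q i * xiD p q i) else 0 := by
    intro i j
    by_cases h : i = j
    · subst h; rw [if_pos rfl, cm]
      exact cmL18 _ _ _ (rel_NM_self i) (rel_NN_self i) (rel_MA i i) (rel_NA i i)
    · rw [if_neg h, cm]
      exact cmL18' _ _ _ _ (rel_NM_ne (Ne.symm h)) (rel_NN i j) (rel_MA i j)
        (rel_NA i j) (rel_NA j j)
  simp only [hs]
  rw [sum_diag, ← Finset.sum_neg_distrib]
  refine Finset.sum_congr rfl fun i _ => ?_
  module

lemma relSQ : cm (opSS p q) (opQ p q) = opQ p q := by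
  rw [opSS, cm_subl, cm_smul_one_l, sub_zero, opS_eq, opQ_eq, cm_sum_sum]
  have hs : ∀ i j : Fin (p + q), cm (xiMul p q i * xiD p q i) (xiMul p q j * pMul p q j)
      = if i = j then xiMul p q i * pMul p q i else 0 := by
    intro i j
    by_cases h : i = j
    · subst h; rw [if_pos rfl, cm]
      exact cmL17 _ _ _ (rel_NM_self i) (rel_MM_self i) (rel_MA i i) (rel_NA i i)
    · rw [if_neg h, cm]
      exact cmL17' _ _ _ _ (rel_NM_ne h) (rel_MM i j) (rel_MA i j) (rel_NA i j)
        (rel_MA j j)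
  simp only [hs]
  rw [sum_diag]
  refine Finset.sum_congr rfl fun i _ => ?_
  module

lemma relSQs : cm (opSS p q) (opQs p q) = - opQs p q := by
  rw [opSS, cm_subl, cm_smul_one_l, sub_zero, opS_eq, opQs_eq, cm_sum_sum]
  have hs : ∀ i j : Fin (p + q), cm (xiMul p q i * xiD p q i) (xiD p q j * pD p q j)
      = if i = j then -(xiD p q i * pD p q i) else 0 := by
    intro i j
    by_cases h : i = j
    · subst h; rw [if_pos rfl, cm]
      exact cmL22 _ _ _ (rel_NM_self i) (rel_NN_self i) (rel_MD i i) (rel_ND i i)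
    · rw [if_neg h, cm]
      exact cmL22' _ _ _ _ (rel_NM_ne (Ne.symm h)) (rel_NN i j) (rel_MD i j)
        (rel_ND i j) (rel_ND j j)
  simp only [hs]
  rw [sum_diag, ← Finset.sum_neg_distrib]
  refine Finset.sum_congr rfl fun i _ => ?_
  module

lemma reldd : opd p q * opd p q = 0 := by
  rw [opd, mul_sum_sum]
  refine sum_antisym _ fun i j => ?_
  rw [sq_anti _ _ _ _ (rel_MM i j) (rel_DD i j) (rel_MD j i) (rel_MD i j),
    smul_neg, mul_comm (eta p q i)]

lemma reldsds : opds p q * opds p q = 0 := by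
  rw [opds, mul_sum_sum]
  refine sum_antisym _ fun i j => ?_
  rw [sq_anti2 _ _ _ _ (rel_NN i j) (rel_AA i j) (rel_NA i j) (rel_NA j i),
    smul_neg, mul_comm (eta p q i)]

lemma relQQ : opQ p q * opQ p q = 0 := by
  rw [opQ_eq, mul_sum_sum]
  refine sum_antisym _ fun i j => ?_
  rw [sq_anti _ _ _ _ (rel_MM i j) (rel_AA i j) (rel_MA j i) (rel_MA i j),
    smul_neg, mul_comm (1:ℝ)]

lemma relQsQs : opQs p q * opQs p q = 0 := by
  rw [opQs_eq, mul_sum_sum]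
  refine sum_antisym _ fun i j => ?_
  rw [sq_anti _ _ _ _ (rel_NN i j) (rel_DD i j) (rel_ND j i) (rel_ND i j),
    smul_neg, mul_comm (1:ℝ)]

lemma reldds : acm (opd p q) (opds p q) = opEE p q + opSS p q := by
  rw [opd, opds, acm_sum_sum]
  have hs : ∀ i j : Fin (p + q), acm (xiMul p q i * pD p q i) (pMul p q j * xiD p q j)
      = if i = j then xiMul p q i * xiD p q i + pMul p q i * pD p q i else 0 := by
    intro i j
    by_cases h : i = j
    · subst h; rw [if_pos rfl, acm]
      exact acmP25 _ _ _ _ (rel_DA_self i) (rel_NM_self i) (rel_MA i i) (rel_ND i i)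
    · rw [if_neg h, acm]
      exact acmP25' _ _ _ _ (rel_DA_ne h) (rel_NM_ne (Ne.symm h)) (rel_MA i j)
        (rel_ND j i)
  simp only [hs]
  rw [sum_diag]
  simp only [eta_mul_self, one_smul, Finset.sum_add_distrib]
  rw [opEE, opSS, opE, opS]
  abel

lemma relQQs : acm (opQ p q) (opQs p q) = opEE p q - opSS p q := by
  rw [opQ_eq, opQs_eq, acm_sum_sum]
  have hs : ∀ i j : Fin (p + q), acm (xiMul p q i * pMul p q i) (xiD p q j * pD p q j)
      = if i = j then pMul p q i * pD p q i + 1 - xiMul p q i * xiD p q i else 0 := by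
    intro i j
    by_cases h : i = j
    · subst h; rw [if_pos rfl, acm]
      exact acmP26 _ _ _ _ (rel_DA_self i) (rel_NM_self i) (rel_NA i i) (rel_MD i i)
    · rw [if_neg h, acm]
      exact acmP26' _ _ _ _ (rel_DA_ne (Ne.symm h)) (rel_NM_ne (Ne.symm h))
        (rel_NA j i) (rel_MD i j)
  simp only [hs]
  rw [sum_diag]
  simp only [one_mul, one_smul, Finset.sum_sub_distrib, Finset.sum_add_distrib,
    Finset.sum_const, Finset.card_univ, Fintype.card_fin]
  rw [opEE, opSS, opE, opS, ← Nat.cast_smul_eq_nsmul ℝ]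
  module

lemma reldQs : acm (opd p q) (opQs p q) = opT p q := by
  rw [opd, opQs_eq, acm_sum_sum]
  have hs : ∀ i j : Fin (p + q), acm (xiMul p q i * pD p q i) (xiD p q j * pD p q j)
      = if i = j then pD p q i * pD p q i else 0 := by
    intro i j
    by_cases h : i = j
    · subst h; rw [if_pos rfl, acm]
      exact acmP27 _ _ _ (rel_NM_self i) (rel_MD i i) (rel_ND i i)
    · rw [if_neg h, acm]
      exact acmP27' _ _ _ _ (rel_DD i j) (rel_NM_ne (Ne.symm h)) (rel_ND j i)
        (rel_MD i j)
  simp only [hs]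
  rw [sum_diag, opT]
  refine Finset.sum_congr rfl fun i _ => ?_
  module

lemma reldsQ : acm (opds p q) (opQ p q) = opR p q := by
  rw [opds, opQ_eq, acm_sum_sum]
  have hs : ∀ i j : Fin (p + q), acm (pMul p q i * xiD p q i) (xiMul p q j * pMul p q j)
      = if i = j then pMul p q i * pMul p q i else 0 := by
    intro i j
    by_cases h : i = j
    · subst h; rw [if_pos rfl, acm]
      exact acmP28 _ _ _ (rel_NM_self i) (rel_MA i i) (rel_NA i i)
    · rw [if_neg h, acm]
      exact acmP28' _ _ _ _ (rel_AA i j) (rel_NM_ne h) (rel_MA j i) (rel_NA i j)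
  simp only [hs]
  rw [sum_diag, opR]
  refine Finset.sum_congr rfl fun i _ => ?_
  module

lemma reldQ : acm (opd p q) (opQ p q) = 0 := by
  rw [opd, opQ_eq, acm_sum_sum]
  have hs : ∀ i j : Fin (p + q), acm (xiMul p q i * pD p q i) (xiMul p q j * pMul p q j)
      = 0 := by
    intro i j
    by_cases h : i = j
    · subst h; rw [acm]
      exact acmP29 _ _ _ (rel_MM_self i) (rel_MD i i) (rel_MA i i)
    · rw [acm]
      exact acmP29' _ _ _ _ (rel_MM i j) (rel_DA_ne h) (rel_MD j i) (rel_MA i j)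
  simp [hs]

lemma reldsQs : acm (opds p q) (opQs p q) = 0 := by
  rw [opds, opQs_eq, acm_sum_sum]
  have hs : ∀ i j : Fin (p + q), acm (pMul p q i * xiD p q i) (xiD p q j * pD p q j)
      = 0 := by
    intro i j
    by_cases h : i = j
    · subst h; rw [acm]
      exact acmP30 _ _ _ (rel_DA_self i) (rel_NN_self i) (rel_NA i i) (rel_ND i i)
    · rw [acm]
      exact acmP30' _ _ _ _ (rel_DA_ne (Ne.symm h)) (rel_NN i j) (rel_NA j i)
        (rel_ND i j)
  simp [hs]

end TheRels

/-- The defining relations of the orthosymplectic Lie superalgebra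
`spo(2|1,1)` realized by the eight fiberwise operators `R, E, T, 𝗌, Q, δ, δ*, Q*` on `W`. -/
theorem statement4 (p q : ℕ) (hn : 1 ≤ p + q) :
    cm (opEE p q) (opR p q) = (2:ℝ) • opR p q ∧
    cm (opEE p q) (opT p q) = (-2:ℝ) • opT p q ∧
    cm (opT p q) (opR p q) = (4:ℝ) • opEE p q ∧
    cm (opSS p q) (opR p q) = 0 ∧
    cm (opSS p q) (opEE p q) = 0 ∧
    cm (opSS p q) (opT p q) = 0 ∧
    cm (opR p q) (opd p q) = (-2:ℝ) • opQ p q ∧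
    cm (opR p q) (opQs p q) = (-2:ℝ) • opds p q ∧
    cm (opR p q) (opQ p q) = 0 ∧
    cm (opR p q) (opds p q) = 0 ∧
    cm (opT p q) (opds p q) = (2:ℝ) • opQs p q ∧
    cm (opT p q) (opQ p q) = (2:ℝ) • opd p q ∧
    cm (opT p q) (opd p q) = 0 ∧
    cm (opT p q) (opQs p q) = 0 ∧
    cm (opEE p q) (opd p q) = - opd p q ∧
    cm (opEE p q) (opds p q) = opds p q ∧
    cm (opEE p q) (opQ p q) = opQ p q ∧
    cm (opEE p q) (opQs p q) = - opQs p q ∧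
    cm (opSS p q) (opd p q) = opd p q ∧
    cm (opSS p q) (opds p q) = - opds p q ∧
    cm (opSS p q) (opQ p q) = opQ p q ∧
    cm (opSS p q) (opQs p q) = - opQs p q ∧
    opd p q * opd p q = 0 ∧
    opds p q * opds p q = 0 ∧
    opQ p q * opQ p q = 0 ∧
    opQs p q * opQs p q = 0 ∧
    acm (opd p q) (opds p q) = opEE p q + opSS p q ∧
    acm (opQ p q) (opQs p q) = opEE p q - opSS p q ∧
    acm (opd p q) (opQs p q) = opT p q ∧
    acm (opds p q) (opQ p q) = opR p q ∧
    acm (opd p q) (opQ p q) = 0 ∧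
    acm (opds p q) (opQs p q) = 0 := by
  exact ⟨relER p q, relET p q, relTR p q, relSR p q, relSE p q, relST p q, relRd p q,
    relRQs p q, relRQ p q, relRds p q, relTds p q, relTQ p q, relTd p q, relTQs p q,
    relEd p q, relEds p q, relEQ p q, relEQs p q, relSd p q, relSds p q, relSQ p q,
    relSQs p q, reldd p q, reldsds p q, relQQ p q, relQsQs p q, reldds p q, relQQs p q,
    reldQs p q, reldsQ p q, reldQ p q, reldsQs p q⟩
end

end SpinQuant
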